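/- Let V be a real inner product space, A : V → V a linear map with ⟪A v, v⟫ ≥ 0 for all v ∈ V, k > 0, N ≥ 1, and let U⁰, U¹, …, U^N ∈ V and f¹, …, f^N ∈ V satisfy (Uⁿ − Uⁿ⁻¹)/k + (1 + ⟪A Uⁿ, Uⁿ⟫) · A Uⁿ = fⁿ for n = 1, …, N. Then ‖U^N‖ ≤ ‖U⁰‖ + 2k ∑_{n=1}^{N} ‖fⁿ‖. -/

import Mathlib

/-- Lemma 4.1: unconditional stability of the backward Euler scheme for the Kirchhoff
parabolic equation. -/
theorem backward_euler_stability
    {V : Type*} [NormedAddCommGroup V] [InnerProductSpace ℝ V]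
    (A : V →ₗ[ℝ] V)
    (hpos : ∀ v : V, (0 : ℝ) ≤ inner ℝ (A v) v)
    (k : ℝ) (hk : 0 < k) (N : ℕ) (hN : 1 ≤ N)
    (U : ℕ → V) (f : ℕ → V)
    (hscheme : ∀ n, 1 ≤ n → n ≤ N →
      (1 / k) • (U n - U (n - 1)) + (1 + (inner ℝ (A (U n)) (U n) : ℝ)) • A (U n) = f n) :
    ‖U N‖ ≤ ‖U 0‖ + 2 * k * ∑ n ∈ Finset.Icc 1 N, ‖f n‖ := by
  -- step estimate
  have step : ∀ n, 1 ≤ n → n ≤ N → ‖U n‖ ≤ ‖U (n - 1)‖ + k * ‖f n‖ := by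
    intro n hn1 hnN
    have h := hscheme n hn1 hnN
    have h2 : (1 / k) * (inner ℝ (U n - U (n - 1)) (U n) : ℝ)
        + (1 + (inner ℝ (A (U n)) (U n) : ℝ)) * (inner ℝ (A (U n)) (U n) : ℝ)
        = (inner ℝ (f n) (U n) : ℝ) := by
      have := congrArg (fun v : V => (inner ℝ v (U n) : ℝ)) h
      simpa [inner_add_left, real_inner_smul_left] using this
    set a : ℝ := (inner ℝ (A (U n)) (U n) : ℝ) with ha
    have ha0 : 0 ≤ a := hpos (U n)
    have hterm : 0 ≤ (1 + a) * a := mul_nonneg (by linarith) ha0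
    have h3 : (1 / k) * (inner ℝ (U n - U (n - 1)) (U n) : ℝ) ≤ (inner ℝ (f n) (U n) : ℝ) := by
      linarith
    have h4 : (inner ℝ (U n - U (n - 1)) (U n) : ℝ) ≤ k * (inner ℝ (f n) (U n) : ℝ) := by
      have := mul_le_mul_of_nonneg_left h3 hk.le
      calc (inner ℝ (U n - U (n - 1)) (U n) : ℝ)
          = k * ((1 / k) * (inner ℝ (U n - U (n - 1)) (U n) : ℝ)) := by
            field_simp
        _ ≤ k * (inner ℝ (f n) (U n) : ℝ) := this
    have hexp : (inner ℝ (U n - U (n - 1)) (U n) : ℝ)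
        = ‖U n‖ ^ 2 - (inner ℝ (U (n - 1)) (U n) : ℝ) := by
      rw [inner_sub_left, real_inner_self_eq_norm_sq]
    have hcs1 : (inner ℝ (U (n - 1)) (U n) : ℝ) ≤ ‖U (n - 1)‖ * ‖U n‖ :=
      real_inner_le_norm _ _
    have hcs2 : (inner ℝ (f n) (U n) : ℝ) ≤ ‖f n‖ * ‖U n‖ :=
      real_inner_le_norm _ _
    have key : ‖U n‖ ^ 2 ≤ ‖U (n - 1)‖ * ‖U n‖ + k * (‖f n‖ * ‖U n‖) := by
      nlinarith [mul_le_mul_of_nonneg_left hcs2 hk.le]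
    rcases eq_or_lt_of_le (norm_nonneg (U n)) with h0 | h0
    · rw [← h0]
      positivity
    · nlinarith
  -- induction
  have main : ∀ m, m ≤ N → ‖U m‖ ≤ ‖U 0‖ + ∑ n ∈ Finset.Icc 1 m, k * ‖f n‖ := by
    intro m
    induction m with
    | zero => intro _; simp
    | succ m ih =>
      intro hm
      have hmN : m ≤ N := le_trans (Nat.le_succ m) hm
      have h1 := step (m + 1) (Nat.le_add_left 1 m) hm
      simp only [Nat.add_sub_cancel] at h1
      rw [Finset.sum_Icc_succ_top (by omega : 1 ≤ m + 1)]
      have := ih hmN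
      linarith
  have h := main N le_rfl
  have hsum : ∑ n ∈ Finset.Icc 1 N, k * ‖f n‖ = k * ∑ n ∈ Finset.Icc 1 N, ‖f n‖ :=
    (Finset.mul_sum _ _ _).symm
  have hnn : 0 ≤ k * ∑ n ∈ Finset.Icc 1 N, ‖f n‖ := by positivity
  rw [hsum] at h
  linarith
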